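/- arXiv:1501.07414 — 6 statements merged into one kernel-verified Lean document; each statement's English description precedes it below -/
import Mathlib

section
/- The coefficients (β̃^Λ)_{Λ ∈ S̃} of the least-squares approximation f̃ of f on S̃ are characterized by the normal equations: Σ_{x ∈ Ω_λ} f̃(x) = Σ_{x ∈ Ω_λ} f(x) for all λ ∈ S̃, where Ω_λ = {x ∈ {0,1}^n : x_k = 1 for all k ∈ λ}. -/
open Finset

/-- The monomial `∏_{k ∈ Λ} x_k` for binary `x`. -/
noncomputable def mono {n : ℕ} (Λ : Finset (Fin n)) (x : Fin n → Bool) : ℝ :=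
  ∏ k ∈ Λ, (if x k then (1 : ℝ) else 0)

/-- Binary polynomial represented on the family `S` with coefficients `β`. -/
noncomputable def poly {n : ℕ} (S : Finset (Finset (Fin n))) (β : Finset (Fin n) → ℝ)
    (x : Fin n → Bool) : ℝ :=
  ∑ Λ ∈ S, β Λ * mono Λ x

/-- Error sum of squares between two pseudo-Boolean functions. -/
noncomputable def SSE {n : ℕ} (f g : (Fin n → Bool) → ℝ) : ℝ :=
  ∑ x : Fin n → Bool, (f x - g x) ^ 2

/-- `g` is the least-squares approximation of `f` represented on `S`. -/
def isLSA {n : ℕ} (S : Finset (Finset (Fin n))) (f g : (Fin n → Bool) → ℝ) : Prop :=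
  (∃ β : Finset (Fin n) → ℝ, g = poly S β) ∧
    ∀ γ : Finset (Fin n) → ℝ, SSE f g ≤ SSE f (poly S γ)

/-- `Ω_λ`: the binary vectors with `x_k = 1` for all `k ∈ λ`. -/
def Omega {n : ℕ} (lam : Finset (Fin n)) : Finset (Fin n → Bool) :=
  Finset.univ.filter (fun x => ∀ k ∈ lam, x k = true)

lemma mono_eq_ite {n : ℕ} (Λ : Finset (Fin n)) (x : Fin n → Bool) :
    mono Λ x = if (∀ k ∈ Λ, x k = true) then 1 else 0 := by
  by_cases h : ∀ k ∈ Λ, x k = true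
  · rw [if_pos h]
    exact Finset.prod_eq_one fun k hk => by simp [h k hk]
  · rw [if_neg h]
    push_neg at h
    obtain ⟨k, hk, hxk⟩ := h
    exact Finset.prod_eq_zero hk (by simp [hxk])

lemma sum_omega {n : ℕ} (lam : Finset (Fin n)) (h : (Fin n → Bool) → ℝ) :
    ∑ x ∈ Omega lam, h x = ∑ x : Fin n → Bool, h x * mono lam x := by
  rw [Omega, Finset.sum_filter]
  refine Finset.sum_congr rfl fun x _ => ?_
  rw [mono_eq_ite]
  split <;> simp

lemma mono_mul_self {n : ℕ} (Λ : Finset (Fin n)) (x : Fin n → Bool) :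
    mono Λ x * mono Λ x = mono Λ x := by
  rw [mono_eq_ite]; split <;> ring

/-- The least-squares coefficients are characterized by the normal equations. -/
theorem lsa_iff_normal_equations {n : ℕ} (f : (Fin n → Bool) → ℝ)
    (S : Finset (Finset (Fin n))) (β : Finset (Fin n) → ℝ) :
    (∀ γ : Finset (Fin n) → ℝ, SSE f (poly S β) ≤ SSE f (poly S γ)) ↔
      ∀ lam ∈ S, ∑ x ∈ Omega lam, poly S β x = ∑ x ∈ Omega lam, f x := by
  -- Reformulate the normal equations via C lam := ∑ x, (f x - poly S β x) * mono lam x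
  set g := poly S β with hg
  have hNE : ∀ lam, ((∑ x ∈ Omega lam, poly S β x = ∑ x ∈ Omega lam, f x) ↔
      (∑ x : Fin n → Bool, (f x - g x) * mono lam x = 0)) := by
    intro lam
    rw [sum_omega, sum_omega]
    constructor
    · intro h
      have : ∑ x : Fin n → Bool, (f x - g x) * mono lam x
          = (∑ x : Fin n → Bool, f x * mono lam x) - ∑ x : Fin n → Bool, g x * mono lam x := by
        rw [← Finset.sum_sub_distrib]; exact Finset.sum_congr rfl fun x _ => by ring
      rw [this, h]; ring
    · intro h
      have h2 : (∑ x : Fin n → Bool, f x * mono lam x) - ∑ x : Fin n → Bool, g x * mono lam x = 0 := by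
        rw [← Finset.sum_sub_distrib, ← h]; exact Finset.sum_congr rfl fun x _ => by ring
      linarith [h2]
  constructor
  · -- minimality → normal equations
    intro hmin lam hlam
    rw [hNE lam]
    set C := ∑ x : Fin n → Bool, (f x - g x) * mono lam x with hC
    set D := ∑ x : Fin n → Bool, mono lam x with hD
    have hDpos : 0 < D := by
      rw [hD]
      have h1 : ∀ x : Fin n → Bool, 0 ≤ mono lam x := by
        intro x; rw [mono_eq_ite]; split <;> norm_num
      have h2 : mono lam (fun _ => true) = 1 := by rw [mono_eq_ite]; simp
      calc (0:ℝ) < 1 := one_pos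
        _ = mono lam (fun _ => true) := h2.symm
        _ ≤ ∑ x : Fin n → Bool, mono lam x :=
          Finset.single_le_sum (fun x _ => h1 x) (Finset.mem_univ _)
    -- perturb β in direction lam by t
    have key : ∀ t : ℝ, SSE f g ≤ SSE f g - 2 * t * C + t ^ 2 * D := by
      intro t
      have hγ : ∀ x, poly S (fun Λ => β Λ + if Λ = lam then t else 0) x
          = g x + t * mono lam x := by
        intro x
        rw [hg]
        simp only [poly, add_mul, Finset.sum_add_distrib]
        congr 1
        simp only [ite_mul, zero_mul]
        rw [Finset.sum_ite_eq' S lam (fun Λ => t * mono Λ x)]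
        simp [hlam]
      have := hmin (fun Λ => β Λ + if Λ = lam then t else 0)
      have hSSE : SSE f (poly S (fun Λ => β Λ + if Λ = lam then t else 0))
          = SSE f g - 2 * t * C + t ^ 2 * D := by
        simp only [SSE, hγ]
        rw [hC, hD, Finset.mul_sum, Finset.mul_sum, ← Finset.sum_sub_distrib,
          ← Finset.sum_add_distrib]
        refine Finset.sum_congr rfl fun x _ => ?_
        nlinarith [mono_mul_self lam x]
      linarith [hSSE ▸ this]
    have := key (C / D)
    have hC2 : C ^ 2 / D ≤ 0 := by
      have : SSE f g ≤ SSE f g - C ^ 2 / D := by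
        have e : SSE f g - 2 * (C / D) * C + (C / D) ^ 2 * D = SSE f g - C ^ 2 / D := by
          field_simp; ring
        linarith [e ▸ this]
      linarith
    have : C ^ 2 ≤ 0 := by
      by_contra h
      push_neg at h
      have := div_pos h hDpos
      linarith
    nlinarith [sq_nonneg C]
  · -- normal equations → minimality
    intro hne γ
    have hcross : ∑ x : Fin n → Bool, (f x - g x) * (g x - poly S γ x) = 0 := by
      have hdiff : ∀ x, g x - poly S γ x = ∑ Λ ∈ S, (β Λ - γ Λ) * mono Λ x := by
        intro x
        rw [hg]
        simp only [poly, ← Finset.sum_sub_distrib]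
        exact Finset.sum_congr rfl fun Λ _ => by ring
      calc ∑ x : Fin n → Bool, (f x - g x) * (g x - poly S γ x)
          = ∑ x : Fin n → Bool, ∑ Λ ∈ S, (β Λ - γ Λ) * ((f x - g x) * mono Λ x) := by
            refine Finset.sum_congr rfl fun x _ => ?_
            rw [hdiff x, Finset.mul_sum]
            exact Finset.sum_congr rfl fun Λ _ => by ring
        _ = ∑ Λ ∈ S, (β Λ - γ Λ) * ∑ x : Fin n → Bool, (f x - g x) * mono Λ x := by
            rw [Finset.sum_comm]
            exact Finset.sum_congr rfl fun Λ _ => by rw [Finset.mul_sum]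
        _ = 0 := by
            refine Finset.sum_eq_zero fun Λ hΛ => ?_
            rw [(hNE Λ).mp (hne Λ hΛ)]; ring
    have expand : SSE f (poly S γ)
        = SSE f g + 2 * ∑ x : Fin n → Bool, (f x - g x) * (g x - poly S γ x)
          + ∑ x : Fin n → Bool, (g x - poly S γ x) ^ 2 := by
      simp only [SSE]
      rw [Finset.mul_sum, ← Finset.sum_add_distrib, ← Finset.sum_add_distrib]
      exact Finset.sum_congr rfl fun x _ => by ring
    rw [expand, hcross]
    have : 0 ≤ ∑ x : Fin n → Bool, (g x - poly S γ x) ^ 2 :=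
      Finset.sum_nonneg fun x _ => sq_nonneg _
    linarith
end

section
/- The least-squares approximation operators satisfy the projection tower property: if S̃̃ ⊆ S̃ are families of subsets of N, then A_{S̃̃}[A_{S̃}{f}] = A_{S̃̃}{f} for any pseudo-Boolean function f. -/
open Finset

lemma inner_poly {n : ℕ} (S : Finset (Finset (Fin n))) (δ : Finset (Fin n) → ℝ)
    (u : (Fin n → Bool) → ℝ) :
    ∑ x : Fin n → Bool, u x * poly S δ x
      = ∑ Λ ∈ S, δ Λ * ∑ x : Fin n → Bool, u x * mono Λ x := by
  simp only [poly, Finset.mul_sum]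
  rw [Finset.sum_comm]
  exact Finset.sum_congr rfl fun Λ _ => Finset.sum_congr rfl fun x _ => by ring

lemma orth_of_min {n : ℕ} (S : Finset (Finset (Fin n))) (f g : (Fin n → Bool) → ℝ)
    (h : isLSA S f g) :
    ∀ Λ ∈ S, ∑ x : Fin n → Bool, (f x - g x) * mono Λ x = 0 := by
  obtain ⟨⟨β, rfl⟩, hmin⟩ := h
  intro Λ hΛ
  set c := ∑ x : Fin n → Bool, (f x - poly S β x) * mono Λ x with hc
  set d := ∑ x : Fin n → Bool, (mono Λ x) ^ 2 with hd
  have hd0 : 0 ≤ d := Finset.sum_nonneg fun x _ => sq_nonneg _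
  have key : ∀ t : ℝ, 0 ≤ -2 * t * c + t ^ 2 * d := by
    intro t
    have hmin' := hmin (fun Λ' => β Λ' + (if Λ' = Λ then t else 0))
    have hpoly : ∀ x, poly S (fun Λ' => β Λ' + (if Λ' = Λ then t else 0)) x
        = poly S β x + t * mono Λ x := by
      intro x
      simp only [poly, add_mul, Finset.sum_add_distrib]
      congr 1
      rw [Finset.sum_eq_single Λ]
      · simp
      · intro b _ hb; simp [hb]
      · intro h; exact absurd hΛ h
    have expand : SSE f (poly S (fun Λ' => β Λ' + (if Λ' = Λ then t else 0)))
        = SSE f (poly S β) + (-2 * t * c + t ^ 2 * d) := by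
      simp only [SSE, hpoly]
      rw [hc, hd, Finset.mul_sum, Finset.mul_sum,
        ← Finset.sum_add_distrib, ← Finset.sum_add_distrib]
      exact Finset.sum_congr rfl fun x _ => by ring
    rw [expand] at hmin'
    linarith
  have h1 := key (c / (d + 1))
  have hdpos : (0 : ℝ) < d + 1 := by linarith
  rw [div_pow] at h1
  have h2 : 0 ≤ (-2 * (c / (d + 1)) * c + c ^ 2 / (d + 1) ^ 2 * d) * (d + 1) ^ 2 :=
    mul_nonneg h1 (by positivity)
  have h3 : (-2 * (c / (d + 1)) * c + c ^ 2 / (d + 1) ^ 2 * d) * (d + 1) ^ 2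
      = -2 * c ^ 2 * (d + 1) + c ^ 2 * d := by
    field_simp
  rw [h3] at h2
  nlinarith [sq_nonneg c]

lemma min_of_orth {n : ℕ} (S : Finset (Finset (Fin n))) (f g : (Fin n → Bool) → ℝ)
    (β : Finset (Fin n) → ℝ) (hg : g = poly S β)
    (horth : ∀ Λ ∈ S, ∑ x : Fin n → Bool, (f x - g x) * mono Λ x = 0) :
    ∀ γ : Finset (Fin n) → ℝ, SSE f g ≤ SSE f (poly S γ) := by
  intro γ
  have hcross : ∑ x : Fin n → Bool, (f x - g x) * poly S (fun Λ => β Λ - γ Λ) x = 0 := by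
    rw [inner_poly]
    exact Finset.sum_eq_zero fun Λ hΛ => by rw [horth Λ hΛ, mul_zero]
  have hdiff : ∀ x, poly S (fun Λ => β Λ - γ Λ) x = g x - poly S γ x := by
    intro x
    simp only [hg, poly, sub_mul, Finset.sum_sub_distrib]
  have expand : SSE f (poly S γ) = SSE f g
      + 2 * ∑ x : Fin n → Bool, (f x - g x) * poly S (fun Λ => β Λ - γ Λ) x
      + ∑ x : Fin n → Bool, (g x - poly S γ x) ^ 2 := by
    simp only [SSE, hdiff, Finset.mul_sum]
    rw [← Finset.sum_add_distrib, ← Finset.sum_add_distrib]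
    exact Finset.sum_congr rfl fun x _ => by ring
  have hnn : 0 ≤ ∑ x : Fin n → Bool, (g x - poly S γ x) ^ 2 :=
    Finset.sum_nonneg fun x _ => sq_nonneg _
  rw [expand, hcross]
  linarith

/-- Projection tower property of least-squares approximation. -/
theorem lsa_tower {n : ℕ} (S1 S2 : Finset (Finset (Fin n))) (hsub : S2 ⊆ S1)
    (f F G : (Fin n → Bool) → ℝ)
    (h1 : isLSA S1 f F) (h2 : isLSA S2 F G) :
    isLSA S2 f G := by
  obtain ⟨β₂, hGβ⟩ := h2.1
  have o1 := orth_of_min S1 f F h1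
  have o2 := orth_of_min S2 F G h2
  have horth : ∀ Λ ∈ S2, ∑ x : Fin n → Bool, (f x - G x) * mono Λ x = 0 := by
    intro Λ hΛ
    have := o1 Λ (hsub hΛ)
    have := o2 Λ hΛ
    have hsum : ∑ x : Fin n → Bool, (f x - G x) * mono Λ x
        = (∑ x : Fin n → Bool, (f x - F x) * mono Λ x)
          + ∑ x : Fin n → Bool, (F x - G x) * mono Λ x := by
      rw [← Finset.sum_add_distrib]
      exact Finset.sum_congr rfl fun x _ => by ring
    rw [hsum]
    simp [o1 Λ (hsub hΛ), o2 Λ hΛ]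
  exact ⟨⟨β₂, hGβ⟩, min_of_orth S2 f G β₂ hGβ horth⟩
end

section
/- The best (k−1)-order least-squares approximation of the single monomial β^λ Π_{k∈λ} x_k (with |λ| = k) on the family of all strict subsets of λ has coefficients β̃^Λ = (−1)^{|λ|−1−|Λ|} (1/2)^{|λ|−|Λ|} β^λ for each Λ ⊊ λ. That is, the function Σ_{Λ⊊λ} (−1)^{|λ|−1−|Λ|} (1/2)^{|λ|−|Λ|} β^λ Π_{k∈Λ} x_k minimizes the sum of squared errors over {0,1}^n among all functions represented on {Λ : Λ ⊊ λ}. -/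
open Finset

/-- Key orthogonality: the centered product sums to zero against any
strict-subset monomial. -/
lemma ortho_aux {n : ℕ} (lam Λ : Finset (Fin n)) (hsub : Λ ⊆ lam) (hne : Λ ≠ lam) :
    ∑ x : Fin n → Bool,
      (∏ k ∈ lam, ((if x k then (1:ℝ) else 0) - 1/2)) * mono Λ x = 0 := by
  classical
  have key : ∀ x : Fin n → Bool,
      (∏ k ∈ lam, ((if x k then (1:ℝ) else 0) - 1/2)) * mono Λ x =
      ∏ k : Fin n, ((if k ∈ lam then ((if x k then (1:ℝ) else 0) - 1/2) else 1) *
        (if k ∈ Λ then (if x k then (1:ℝ) else 0) else 1)) := by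
    intro x
    rw [Finset.prod_mul_distrib, Finset.prod_ite_mem, Finset.prod_ite_mem,
      Finset.univ_inter, Finset.univ_inter, mono]
  simp only [key]
  have := Finset.prod_univ_sum (fun _ : Fin n => (Finset.univ : Finset Bool))
    (fun k t => (if k ∈ lam then ((if t then (1:ℝ) else 0) - 1/2) else 1) *
      (if k ∈ Λ then (if t then (1:ℝ) else 0) else 1))
  rw [Fintype.piFinset_univ] at this
  rw [← this]
  obtain ⟨j, hjlam, hjΛ⟩ := Finset.exists_of_ssubset (HasSubset.Subset.ssubset_of_ne hsub hne)
  apply Finset.prod_eq_zero (Finset.mem_univ j)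
  simp [hjlam, hjΛ]

/-- The residual of the claimed approximation is the centered product. -/
lemma residual_eq_aux {n : ℕ} (lam : Finset (Fin n)) (hcard : 1 ≤ lam.card) (b : ℝ)
    (x : Fin n → Bool) :
    b * mono lam x - poly (lam.powerset.erase lam)
        (fun Λ => (-1 : ℝ) ^ (lam.card - 1 - Λ.card) *
          (1 / 2 : ℝ) ^ (lam.card - Λ.card) * b) x =
    b * ∏ k ∈ lam, ((if x k then (1:ℝ) else 0) - 1/2) := by
  classical
  have expand : ∏ k ∈ lam, ((if x k then (1:ℝ) else 0) - 1/2) =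
      ∑ t ∈ lam.powerset, mono t x * (-(1/2) : ℝ) ^ (lam.card - t.card) := by
    have h := Finset.prod_add (fun k => (if x k then (1:ℝ) else 0)) (fun _ => (-(1/2) : ℝ)) lam
    simp only [sub_eq_add_neg]
    rw [h]
    refine Finset.sum_congr rfl (fun t ht => ?_)
    rw [Finset.prod_const, Finset.card_sdiff_of_subset (Finset.mem_powerset.mp ht)]
    rfl
  have hterm : ∀ Λ ∈ lam.powerset.erase lam,
      ((-1 : ℝ) ^ (lam.card - 1 - Λ.card) * (1 / 2 : ℝ) ^ (lam.card - Λ.card) * b) * mono Λ x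
        = -(b * (mono Λ x * (-(1/2) : ℝ) ^ (lam.card - Λ.card))) := by
    intro Λ hΛ
    have hmem := Finset.mem_erase.mp hΛ
    have hlt : Λ.card < lam.card :=
      Finset.card_lt_card (HasSubset.Subset.ssubset_of_ne
        (Finset.mem_powerset.mp hmem.2) hmem.1)
    have hm : lam.card - Λ.card = (lam.card - 1 - Λ.card) + 1 := by omega
    rw [hm, show (-(1/2) : ℝ) = (-1) * (1/2) by norm_num, mul_pow, pow_succ, pow_succ]
    ring
  rw [expand, ← Finset.add_sum_erase _ _ (Finset.mem_powerset.mpr (le_refl lam)),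
    Nat.sub_self, pow_zero, mul_one, poly, Finset.sum_congr rfl hterm, mul_add,
    Finset.mul_sum, Finset.sum_neg_distrib]
  ring

/-- The best lower-order approximation of a single monomial on all strict subsets
of `lam` has the stated coefficients. -/
theorem monomial_lower_order_approx {n : ℕ} (lam : Finset (Fin n))
    (hcard : 1 ≤ lam.card) (b : ℝ) :
    isLSA (lam.powerset.erase lam) (fun x => b * mono lam x)
      (poly (lam.powerset.erase lam)
        (fun Λ => (-1 : ℝ) ^ (lam.card - 1 - Λ.card) *
          (1 / 2 : ℝ) ^ (lam.card - Λ.card) * b)) := by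
  classical
  set S := lam.powerset.erase lam with hS
  set c : Finset (Fin n) → ℝ := fun Λ => (-1 : ℝ) ^ (lam.card - 1 - Λ.card) *
          (1 / 2 : ℝ) ^ (lam.card - Λ.card) * b with hc
  refine ⟨⟨c, rfl⟩, fun γ => ?_⟩
  have hres : ∀ Λ ∈ S, ∑ x : Fin n → Bool, (b * mono lam x - poly S c x) * mono Λ x = 0 := by
    intro Λ hΛ
    have h1 : ∀ x : Fin n → Bool, (b * mono lam x - poly S c x) * mono Λ x =
        b * ((∏ k ∈ lam, ((if x k then (1:ℝ) else 0) - 1/2)) * mono Λ x) := by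
      intro x
      rw [residual_eq_aux lam hcard b x]; ring
    simp only [h1]
    rw [← Finset.mul_sum,
      ortho_aux lam Λ (Finset.mem_powerset.mp (Finset.mem_erase.mp hΛ).2)
        (Finset.mem_erase.mp hΛ).1, mul_zero]
  have hcross : ∑ x : Fin n → Bool,
      (b * mono lam x - poly S c x) * (poly S c x - poly S γ x) = 0 := by
    have hδ : ∀ x, poly S c x - poly S γ x = ∑ Λ ∈ S, (c Λ - γ Λ) * mono Λ x := by
      intro x
      rw [poly, poly, ← Finset.sum_sub_distrib]
      exact Finset.sum_congr rfl (fun Λ _ => by ring)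
    simp only [hδ, Finset.mul_sum]
    rw [Finset.sum_comm]
    refine Finset.sum_eq_zero (fun Λ hΛ => ?_)
    have h2 : ∀ x : Fin n → Bool,
        (b * mono lam x - poly S c x) * ((c Λ - γ Λ) * mono Λ x) =
        (c Λ - γ Λ) * ((b * mono lam x - poly S c x) * mono Λ x) := fun x => by ring
    simp only [h2]
    rw [← Finset.mul_sum, hres Λ hΛ, mul_zero]
  have hexp : SSE (fun x => b * mono lam x) (poly S γ) =
      SSE (fun x => b * mono lam x) (poly S c) +
      2 * (∑ x : Fin n → Bool, (b * mono lam x - poly S c x) * (poly S c x - poly S γ x)) +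
      ∑ x : Fin n → Bool, (poly S c x - poly S γ x) ^ 2 := by
    simp only [SSE]
    rw [Finset.mul_sum, ← Finset.sum_add_distrib, ← Finset.sum_add_distrib]
    exact Finset.sum_congr rfl (fun x _ => by ring)
  rw [hexp, hcross]
  have hnn : 0 ≤ ∑ x : Fin n → Bool, (poly S c x - poly S γ x) ^ 2 :=
    Finset.sum_nonneg (fun x _ => sq_nonneg _)
  linarith
end

section
/- (SOIR error formula) With f and its SOIR approximation f̃ removing all interactions containing both i and j as above, the pointwise error is f(x) − f̃(x) = (x_i x_j + 1/4 − x_i/2 − x_j/2) · Σ_{Λ ∈ S_{{i,j}}} β^Λ Π_{k ∈ Λ∖{i,j}} x_k for all x ∈ {0,1}^n. -/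
open Finset

/-- the correction factor -/
noncomputable def efact {n : ℕ} (i j : Fin n) (x : Fin n → Bool) : ℝ :=
  (if x i then (1 : ℝ) else 0) * (if x j then (1 : ℝ) else 0) + 1 / 4
    - (if x i then (1 : ℝ) else 0) / 2 - (if x j then (1 : ℝ) else 0) / 2

lemma efact_comm {n : ℕ} (i j : Fin n) (x : Fin n → Bool) :
    efact i j x = efact j i x := by unfold efact; ring

lemma efact_update {n : ℕ} {i j : Fin n} (hij : i ≠ j) (x : Fin n → Bool) :
    efact i j (Function.update x j (!x j)) = - efact i j x := by
  unfold efact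
  rw [Function.update_of_ne hij, Function.update_self]
  cases hxi : x i <;> cases hxj : x j <;> norm_num

lemma mono_update {n : ℕ} {Λ : Finset (Fin n)} {k : Fin n} (hk : k ∉ Λ)
    (x : Fin n → Bool) (b : Bool) : mono Λ (Function.update x k b) = mono Λ x := by
  unfold mono
  refine Finset.prod_congr rfl fun l hl => ?_
  have : l ≠ k := fun h => hk (h ▸ hl)
  rw [Function.update_of_ne this]

lemma mono_insert {n : ℕ} {t : Finset (Fin n)} {k : Fin n} (hk : k ∉ t)
    (x : Fin n → Bool) :
    mono (insert k t) x = (if x k then (1 : ℝ) else 0) * mono t x :=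
  Finset.prod_insert hk

/-- orthogonality of the error factor against any function not depending on `x j`. -/
lemma orth {n : ℕ} {i j : Fin n} (hij : i ≠ j) (F : (Fin n → Bool) → ℝ)
    (hF : ∀ x b, F (Function.update x j b) = F x) :
    ∑ x : Fin n → Bool, efact i j x * F x = 0 := by
  classical
  refine Finset.sum_involution (fun x _ => Function.update x j (!x j)) ?_ ?_
    (fun x _ => Finset.mem_univ _) ?_
  · intro x _
    rw [efact_update hij, hF]
    ring
  · intro x _ _ hx
    have := congrFun hx j
    simp at this
  · intro x _
    simp [Function.update_idem]

lemma efact_mono {n : ℕ} {i j : Fin n} (hij : i ≠ j) {Λ : Finset (Fin n)}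
    (hsub : ({i, j} : Finset (Fin n)) ⊆ Λ) (x : Fin n → Bool) :
    efact i j x * mono (Λ \ {i, j}) x =
      mono Λ x + mono (Λ \ {i, j}) x / 4 - mono (Λ \ {j}) x / 2 - mono (Λ \ {i}) x / 2 := by
  classical
  have hi : i ∈ Λ := hsub (by simp)
  have hj : j ∈ Λ := hsub (by simp)
  have hit : i ∉ Λ \ ({i, j} : Finset (Fin n)) := by simp
  have hjt : j ∉ Λ \ ({i, j} : Finset (Fin n)) := by simp
  have hijt : i ∉ insert j (Λ \ ({i, j} : Finset (Fin n))) := by simp [hij]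
  have e1 : Λ \ ({j} : Finset (Fin n)) = insert i (Λ \ ({i, j} : Finset (Fin n))) := by
    ext a; simp only [Finset.mem_sdiff, Finset.mem_insert, Finset.mem_singleton]
    constructor
    · rintro ⟨ha, haj⟩
      by_cases hai : a = i
      · exact Or.inl hai
      · exact Or.inr ⟨ha, by simp [hai, haj]⟩
    · rintro (rfl | ⟨ha, h2⟩)
      · exact ⟨hi, hij⟩
      · simp at h2; exact ⟨ha, h2.2⟩
  have e2 : Λ \ ({i} : Finset (Fin n)) = insert j (Λ \ ({i, j} : Finset (Fin n))) := by
    ext a; simp only [Finset.mem_sdiff, Finset.mem_insert, Finset.mem_singleton]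
    constructor
    · rintro ⟨ha, hai⟩
      by_cases haj : a = j
      · exact Or.inl haj
      · exact Or.inr ⟨ha, by simp [hai, haj]⟩
    · rintro (rfl | ⟨ha, h2⟩)
      · exact ⟨hj, hij.symm⟩
      · simp at h2; exact ⟨ha, h2.1⟩
  have e3 : Λ = insert i (insert j (Λ \ ({i, j} : Finset (Fin n)))) := by
    rw [← e2]
    ext a; simp only [Finset.mem_sdiff, Finset.mem_insert, Finset.mem_singleton]
    constructor
    · intro ha
      by_cases hai : a = i
      · exact Or.inl hai
      · exact Or.inr ⟨ha, hai⟩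
    · rintro (rfl | ⟨ha, _⟩) <;> [exact hi; exact ha]
  have hL : mono Λ x = (if x i then (1:ℝ) else 0) * ((if x j then (1:ℝ) else 0) *
      mono (Λ \ ({i, j} : Finset (Fin n))) x) := by
    nth_rewrite 1 [e3]
    rw [mono_insert hijt, mono_insert hjt]
  rw [e1, e2, mono_insert hit, mono_insert hjt, hL]
  unfold efact
  ring

/-- Pointwise error of the SOIR approximation. -/
theorem soir_error {n : ℕ} (S : Finset (Finset (Fin n)))
    (hdense : ∀ Λ ∈ S, ∀ lam ⊆ Λ, lam ∈ S)
    (i j : Fin n) (hij : i ≠ j) (hmem : ({i, j} : Finset (Fin n)) ∈ S)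
    (β : Finset (Fin n) → ℝ) (ftil : (Fin n → Bool) → ℝ)
    (h : isLSA (S.filter (fun Λ => ¬ ({i, j} : Finset (Fin n)) ⊆ Λ)) (poly S β) ftil) :
    ∀ x : Fin n → Bool,
      poly S β x - ftil x =
        ((if x i then (1 : ℝ) else 0) * (if x j then (1 : ℝ) else 0) + 1 / 4
            - (if x i then (1 : ℝ) else 0) / 2 - (if x j then (1 : ℝ) else 0) / 2) *
          ∑ Λ ∈ S.filter (fun Λ => ({i, j} : Finset (Fin n)) ⊆ Λ),
            β Λ * mono (Λ \ {i, j}) x := by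
  classical
  obtain ⟨⟨γ₀, hγ₀⟩, hmin⟩ := h
  set S' : Finset (Finset (Fin n)) :=
    S.filter (fun Λ => ¬ ({i, j} : Finset (Fin n)) ⊆ Λ) with hS'
  set Sij : Finset (Finset (Fin n)) :=
    S.filter (fun Λ => ({i, j} : Finset (Fin n)) ⊆ Λ) with hSijdef
  set err : (Fin n → Bool) → ℝ :=
    fun x => efact i j x * ∑ Λ ∈ Sij, β Λ * mono (Λ \ {i, j}) x with herrdef
  -- membership facts
  have hmaps : ∀ (t : Finset (Fin n)), t ⊆ ({i, j} : Finset (Fin n)) → t.Nonempty →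
      ∀ Λ ∈ Sij, Λ \ t ∈ S' := by
    intro t ht hne Λ hΛ
    obtain ⟨hΛS, hΛsub⟩ := Finset.mem_filter.mp hΛ
    refine Finset.mem_filter.mpr ⟨hdense Λ hΛS _ (Finset.sdiff_subset), ?_⟩
    intro hc
    obtain ⟨k, hk⟩ := hne
    have hk2 : k ∈ ({i, j} : Finset (Fin n)) := ht hk
    have := hc hk2
    simp only [Finset.mem_sdiff] at this
    exact this.2 hk
  have hmj : ∀ Λ ∈ Sij, Λ \ ({j} : Finset (Fin n)) ∈ S' :=
    hmaps {j} (by intro a ha; simp at ha; simp [ha]) ⟨j, by simp⟩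
  have hmi : ∀ Λ ∈ Sij, Λ \ ({i} : Finset (Fin n)) ∈ S' :=
    hmaps {i} (by intro a ha; simp at ha; simp [ha]) ⟨i, by simp⟩
  have hmij : ∀ Λ ∈ Sij, Λ \ ({i, j} : Finset (Fin n)) ∈ S' :=
    hmaps {i, j} (subset_refl _) ⟨i, by simp⟩
  -- candidate coefficients
  set γ : Finset (Fin n) → ℝ := fun μ =>
    β μ + (∑ Λ ∈ Sij.filter (fun Λ => Λ \ ({j} : Finset (Fin n)) = μ), β Λ / 2)
        + (∑ Λ ∈ Sij.filter (fun Λ => Λ \ ({i} : Finset (Fin n)) = μ), β Λ / 2)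
        - ∑ Λ ∈ Sij.filter (fun Λ => Λ \ ({i, j} : Finset (Fin n)) = μ), β Λ / 4 with hγdef
  -- representation of the candidate approximation
  have hrep : ∀ x, poly S β x - err x = poly S' γ x := by
    intro x
    have hsplit : poly S β x =
        (∑ Λ ∈ Sij, β Λ * mono Λ x) + ∑ Λ ∈ S', β Λ * mono Λ x := by
      rw [poly, ← Finset.sum_filter_add_sum_filter_not S
        (fun Λ => ({i, j} : Finset (Fin n)) ⊆ Λ) (fun Λ => β Λ * mono Λ x)]
    have herr : err x = ∑ Λ ∈ Sij, β Λ *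
        (mono Λ x + mono (Λ \ ({i, j} : Finset (Fin n))) x / 4
          - mono (Λ \ ({j} : Finset (Fin n))) x / 2
          - mono (Λ \ ({i} : Finset (Fin n))) x / 2) := by
      rw [herrdef]
      simp only []
      rw [Finset.mul_sum]
      refine Finset.sum_congr rfl fun Λ hΛ => ?_
      have hsub := (Finset.mem_filter.mp hΛ).2
      have hkey := efact_mono hij hsub x
      calc efact i j x * (β Λ * mono (Λ \ ({i, j} : Finset (Fin n))) x)
          = β Λ * (efact i j x * mono (Λ \ ({i, j} : Finset (Fin n))) x) := by ring
        _ = _ := by rw [hkey]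
    have hpoly' : poly S' γ x = (∑ μ ∈ S', β μ * mono μ x)
        + (∑ Λ ∈ Sij, β Λ / 2 * mono (Λ \ ({j} : Finset (Fin n))) x)
        + (∑ Λ ∈ Sij, β Λ / 2 * mono (Λ \ ({i} : Finset (Fin n))) x)
        - ∑ Λ ∈ Sij, β Λ / 4 * mono (Λ \ ({i, j} : Finset (Fin n))) x := by
      have hexp : ∀ μ ∈ S', γ μ * mono μ x =
          β μ * mono μ x
          + (∑ Λ ∈ Sij.filter (fun Λ => Λ \ ({j} : Finset (Fin n)) = μ),
              β Λ / 2 * mono (Λ \ ({j} : Finset (Fin n))) x)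
          + (∑ Λ ∈ Sij.filter (fun Λ => Λ \ ({i} : Finset (Fin n)) = μ),
              β Λ / 2 * mono (Λ \ ({i} : Finset (Fin n))) x)
          - ∑ Λ ∈ Sij.filter (fun Λ => Λ \ ({i, j} : Finset (Fin n)) = μ),
              β Λ / 4 * mono (Λ \ ({i, j} : Finset (Fin n))) x := by
        intro μ hμ
        rw [hγdef]
        simp only []
        rw [sub_mul, add_mul, add_mul, Finset.sum_mul, Finset.sum_mul, Finset.sum_mul]
        congr 1
        · congr 1
          · congr 1
            exact Finset.sum_congr rfl fun Λ hΛ => by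
              rw [← (Finset.mem_filter.mp hΛ).2]
          · exact Finset.sum_congr rfl fun Λ hΛ => by
              rw [← (Finset.mem_filter.mp hΛ).2]
        · exact Finset.sum_congr rfl fun Λ hΛ => by
            rw [← (Finset.mem_filter.mp hΛ).2]
      rw [poly, Finset.sum_congr rfl hexp, Finset.sum_sub_distrib,
        Finset.sum_add_distrib, Finset.sum_add_distrib,
        Finset.sum_fiberwise_of_maps_to hmj, Finset.sum_fiberwise_of_maps_to hmi,
        Finset.sum_fiberwise_of_maps_to hmij]
    have hkey : (∑ Λ ∈ Sij, β Λ * mono Λ x) - (∑ Λ ∈ Sij, β Λ *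
        (mono Λ x + mono (Λ \ ({i, j} : Finset (Fin n))) x / 4
          - mono (Λ \ ({j} : Finset (Fin n))) x / 2
          - mono (Λ \ ({i} : Finset (Fin n))) x / 2)) =
        (∑ Λ ∈ Sij, β Λ / 2 * mono (Λ \ ({j} : Finset (Fin n))) x)
        + (∑ Λ ∈ Sij, β Λ / 2 * mono (Λ \ ({i} : Finset (Fin n))) x)
        - ∑ Λ ∈ Sij, β Λ / 4 * mono (Λ \ ({i, j} : Finset (Fin n))) x := by
      rw [← Finset.sum_sub_distrib, ← Finset.sum_add_distrib, ← Finset.sum_sub_distrib]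
      exact Finset.sum_congr rfl fun Λ _ => by ring
    rw [hsplit, herr, hpoly']
    linarith [hkey]
  -- orthogonality
  have horthm : ∀ lam ∈ S', ∑ x : Fin n → Bool, err x * mono lam x = 0 := by
    intro lam hlam
    have hns : ¬ ({i, j} : Finset (Fin n)) ⊆ lam := (Finset.mem_filter.mp hlam).2
    have hq : ∀ k ∈ ({i, j} : Finset (Fin n)), ∀ (x : Fin n → Bool) (b : Bool),
        (∑ Λ ∈ Sij, β Λ * mono (Λ \ ({i, j} : Finset (Fin n))) (Function.update x k b))
          = ∑ Λ ∈ Sij, β Λ * mono (Λ \ ({i, j} : Finset (Fin n))) x := by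
      intro k hk x b
      refine Finset.sum_congr rfl fun Λ _ => ?_
      rw [mono_update (by simp only [Finset.mem_sdiff]; tauto) x b]
    have hcase : i ∉ lam ∨ j ∉ lam := by
      by_contra hc
      push_neg at hc
      exact hns (Finset.insert_subset hc.1 (by simp [hc.2]))
    have hterm : ∀ x : Fin n → Bool, err x * mono lam x =
        efact i j x * ((∑ Λ ∈ Sij, β Λ * mono (Λ \ ({i, j} : Finset (Fin n))) x)
          * mono lam x) := by
      intro x
      rw [herrdef]
      ring
    rw [Finset.sum_congr rfl fun x _ => hterm x]
    rcases hcase with hi | hj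
    · rw [Finset.sum_congr rfl fun x _ => by rw [efact_comm]]
      refine orth hij.symm _ ?_
      intro x b
      rw [hq i (by simp) x b, mono_update hi x b]
    · refine orth hij _ ?_
      intro x b
      rw [hq j (by simp) x b, mono_update hj x b]
  have horthp : ∀ γ'' : Finset (Fin n) → ℝ,
      ∑ x : Fin n → Bool, err x * poly S' γ'' x = 0 := by
    intro γ''
    calc ∑ x : Fin n → Bool, err x * poly S' γ'' x
        = ∑ x : Fin n → Bool, ∑ lam ∈ S', γ'' lam * (err x * mono lam x) := by
          refine Finset.sum_congr rfl fun x _ => ?_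
          rw [poly, Finset.mul_sum]
          exact Finset.sum_congr rfl fun lam _ => by ring
      _ = ∑ lam ∈ S', ∑ x : Fin n → Bool, γ'' lam * (err x * mono lam x) :=
          Finset.sum_comm
      _ = 0 := by
          refine Finset.sum_eq_zero fun lam hlam => ?_
          rw [← Finset.mul_sum, horthm lam hlam, mul_zero]
  -- least squares comparison
  have hfg : ∀ x, poly S β x - poly S' γ x = err x := fun x => by linarith [hrep x]
  have hexp : ∀ γ'' : Finset (Fin n) → ℝ,
      SSE (poly S β) (poly S' γ'') = SSE (poly S β) (poly S' γ)
        + ∑ x : Fin n → Bool, (poly S' γ x - poly S' γ'' x) ^ 2 := by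
    intro γ''
    have h2 := horthp γ
    have h3 := horthp γ''
    unfold SSE
    have hpt : ∀ x : Fin n → Bool, (poly S β x - poly S' γ'' x) ^ 2
        = (poly S β x - poly S' γ x) ^ 2 + (poly S' γ x - poly S' γ'' x) ^ 2
          + 2 * (err x * poly S' γ x) - 2 * (err x * poly S' γ'' x) := by
      intro x
      rw [← hfg x]
      ring
    rw [Finset.sum_congr rfl fun x _ => hpt x, Finset.sum_sub_distrib,
      Finset.sum_add_distrib, Finset.sum_add_distrib, ← Finset.mul_sum, ← Finset.mul_sum,
      h2, h3]
    ring
  have h1 : SSE (poly S β) (poly S' γ₀) ≤ SSE (poly S β) (poly S' γ) := by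
    rw [← hγ₀]; exact hmin γ
  have hsum : ∑ x : Fin n → Bool, (poly S' γ x - poly S' γ₀ x) ^ 2 ≤ 0 := by
    have := hexp γ₀
    linarith
  have hnn : ∀ x ∈ (Finset.univ : Finset (Fin n → Bool)),
      (0:ℝ) ≤ (poly S' γ x - poly S' γ₀ x) ^ 2 := fun x _ => sq_nonneg _
  have hzero : ∀ x : Fin n → Bool, (poly S' γ x - poly S' γ₀ x) ^ 2 = 0 := by
    intro x
    exact (Finset.sum_eq_zero_iff_of_nonneg hnn).mp
      (le_antisymm hsum (Finset.sum_nonneg hnn)) x (Finset.mem_univ x)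
  intro x
  have heq : poly S' γ x = ftil x := by
    have := hzero x
    have h4 : poly S' γ x - poly S' γ₀ x = 0 := by
      nlinarith [hzero x]
    rw [hγ₀]
    linarith
  have : poly S β x - ftil x = err x := by rw [← heq]; exact hrep x ▸ by linarith [hrep x]
  rw [this, herrdef]
  simp only [efact]
end

section
/- (Split bound) Let i ≠ j and r ∉ {i,j}, with {i,j,r} ∈ S_{{i,j}}. Then for all x ∈ {0,1}^n, f(x) ≤ Σ_{Λ∈S∖S_{{i,j}}} β^Λ Π_{k∈Λ} x_k + x_i·max{0, Σ_{Λ∈S_{{i,j,r}}} β^Λ Π_{k∈Λ∖{i,j,r}} x_k} + x_i·max{0, Σ_{Λ∈S_{{i,j}}∖S_{{i,j,r}}} β^Λ Π_{k∈Λ∖{i,j}} x_k}, where f(x) = Σ_{Λ∈S} β^Λ Π_{k∈Λ} x_k. -/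
open Finset

lemma mono_nonneg {n : ℕ} (Λ : Finset (Fin n)) (x : Fin n → Bool) : 0 ≤ mono Λ x := by
  unfold mono
  apply Finset.prod_nonneg
  intro k _
  split <;> norm_num

lemma mono_le_one {n : ℕ} (Λ : Finset (Fin n)) (x : Fin n → Bool) : mono Λ x ≤ 1 := by
  unfold mono
  apply Finset.prod_le_one
  · intro k _; split <;> norm_num
  · intro k _; split <;> norm_num

lemma mono_split {n : ℕ} {s Λ : Finset (Fin n)} (h : s ⊆ Λ) (x : Fin n → Bool) :
    mono Λ x = mono s x * mono (Λ \ s) x := by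
  unfold mono
  rw [mul_comm, Finset.prod_sdiff h]

lemma mono_le_ind {n : ℕ} {s : Finset (Fin n)} {i : Fin n} (hi : i ∈ s)
    (x : Fin n → Bool) : mono s x ≤ (if x i then (1 : ℝ) else 0) := by
  by_cases hx : x i
  · simp [hx, mono_le_one]
  · simp only [hx, if_false]
    have : mono s x = 0 := by
      unfold mono
      exact Finset.prod_eq_zero hi (by simp [hx])
    simp [this]

lemma key_bound {n : ℕ} {s : Finset (Fin n)} {i : Fin n} (hi : i ∈ s)
    (x : Fin n → Bool) (T : ℝ) :
    mono s x * T ≤ (if x i then (1 : ℝ) else 0) * max 0 T := by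
  calc mono s x * T ≤ mono s x * max 0 T :=
        mul_le_mul_of_nonneg_left (le_max_right 0 T) (mono_nonneg s x)
    _ ≤ (if x i then (1 : ℝ) else 0) * max 0 T :=
        mul_le_mul_of_nonneg_right (mono_le_ind hi x) (le_max_left 0 T)

/-- The split upper bound obtained by splitting off the interactions containing `r`. -/
theorem split_upper_bound {n : ℕ} (S : Finset (Finset (Fin n))) (i j r : Fin n)
    (hij : i ≠ j) (hir : i ≠ r) (hjr : j ≠ r)
    (hmem : ({i, j, r} : Finset (Fin n)) ∈ S)
    (β : Finset (Fin n) → ℝ) (x : Fin n → Bool) :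
    poly S β x ≤
      (∑ Λ ∈ S.filter (fun Λ => ¬ ({i, j} : Finset (Fin n)) ⊆ Λ), β Λ * mono Λ x)
        + (if x i then (1 : ℝ) else 0) *
            max 0 (∑ Λ ∈ S.filter (fun Λ => ({i, j, r} : Finset (Fin n)) ⊆ Λ),
              β Λ * mono (Λ \ {i, j, r}) x)
        + (if x i then (1 : ℝ) else 0) *
            max 0 (∑ Λ ∈ S.filter (fun Λ => ({i, j} : Finset (Fin n)) ⊆ Λ ∧
                ¬ ({i, j, r} : Finset (Fin n)) ⊆ Λ),
              β Λ * mono (Λ \ {i, j}) x) := by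
  classical
  have hsub : ({i, j} : Finset (Fin n)) ⊆ ({i, j, r} : Finset (Fin n)) := by
    intro a ha
    simp only [Finset.mem_insert, Finset.mem_singleton] at ha ⊢
    tauto
  have hsplit : poly S β x
      = (∑ Λ ∈ S.filter (fun Λ => ¬ ({i, j} : Finset (Fin n)) ⊆ Λ), β Λ * mono Λ x)
        + (∑ Λ ∈ S.filter (fun Λ => ({i, j, r} : Finset (Fin n)) ⊆ Λ), β Λ * mono Λ x)
        + (∑ Λ ∈ S.filter (fun Λ => ({i, j} : Finset (Fin n)) ⊆ Λ ∧
              ¬ ({i, j, r} : Finset (Fin n)) ⊆ Λ), β Λ * mono Λ x) := by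
    unfold poly
    rw [← Finset.sum_filter_add_sum_filter_not S (fun Λ => ({i, j} : Finset (Fin n)) ⊆ Λ)]
    have h2 := Finset.sum_filter_add_sum_filter_not
      (S.filter (fun Λ => ({i, j} : Finset (Fin n)) ⊆ Λ))
      (fun Λ => ({i, j, r} : Finset (Fin n)) ⊆ Λ) (fun Λ => β Λ * mono Λ x)
    rw [Finset.filter_filter, Finset.filter_filter] at h2
    have e1 : S.filter (fun Λ => ({i, j} : Finset (Fin n)) ⊆ Λ ∧
        ({i, j, r} : Finset (Fin n)) ⊆ Λ)
        = S.filter (fun Λ => ({i, j, r} : Finset (Fin n)) ⊆ Λ) := by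
      apply Finset.filter_congr
      intro Λ _
      constructor
      · exact fun h => h.2
      · exact fun h => ⟨hsub.trans h, h⟩
    rw [e1] at h2
    rw [← h2]
    ring
  rw [hsplit]
  gcongr
  · -- middle term
    have hirf : ∀ Λ ∈ S.filter (fun Λ => ({i, j, r} : Finset (Fin n)) ⊆ Λ),
        β Λ * mono Λ x = mono ({i, j, r} : Finset (Fin n)) x
          * (β Λ * mono (Λ \ {i, j, r}) x) := by
      intro Λ hΛ
      rw [Finset.mem_filter] at hΛ
      rw [mono_split hΛ.2 x]; ring
    rw [Finset.sum_congr rfl hirf, ← Finset.mul_sum]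
    exact key_bound (by simp) x _
  · have hirf : ∀ Λ ∈ S.filter (fun Λ => ({i, j} : Finset (Fin n)) ⊆ Λ ∧
        ¬ ({i, j, r} : Finset (Fin n)) ⊆ Λ),
        β Λ * mono Λ x = mono ({i, j} : Finset (Fin n)) x
          * (β Λ * mono (Λ \ {i, j}) x) := by
      intro Λ hΛ
      rw [Finset.mem_filter] at hΛ
      rw [mono_split hΛ.2.1 x]; ring
    rw [Finset.sum_congr rfl hirf, ← Finset.mul_sum]
    exact key_bound (by simp) x _
end

section
/- Summing out one variable of a binary MRF preserves the factorized form: with U(x) = Σ_{Λ∈S} β^Λ Π_{k∈Λ} x_k and i ∈ N, Σ_{x_i∈{0,1}} exp(U(x)) = exp(Σ_{Λ∈S∖S_{{i}}} β^Λ Π_{k∈Λ} x_k) · Σ_{x_i∈{0,1}} exp(Σ_{Λ∈S_{{i}}} β^Λ Π_{k∈Λ} x_k), and moreover there exist real coefficients β̌^Λ indexed by subsets Λ of N∖{i} of the variables appearing jointly with i such that Σ_{x_i∈{0,1}} exp(Σ_{Λ∈S_{{i}}} β^Λ Π_{k∈Λ} x_k) = exp(Σ_{Λ} β̌^Λ Π_{k∈Λ}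 x_k). -/
open Finset

lemma sum_pow_neg_one_real {α : Type*} [DecidableEq α] (x : Finset α) :
    (∑ m ∈ x.powerset, (-1 : ℝ) ^ m.card) = if x = ∅ then 1 else 0 := by
  have h := Finset.sum_powerset_neg_one_pow_card (x := x)
  have h2 : ((∑ m ∈ x.powerset, (-1 : ℤ) ^ m.card : ℤ) : ℝ) =
      ((if x = ∅ then 1 else 0 : ℤ) : ℝ) := by rw [h]
  push_cast at h2
  split_ifs at h2 ⊢ <;> simpa using h2

lemma moebius {α : Type*} [DecidableEq α] (A : Finset α) (f : Finset α → ℝ) :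
    ∑ Λ ∈ A.powerset, ∑ T ∈ Λ.powerset, (-1:ℝ)^(Λ.card - T.card) * f T = f A := by
  have step1 : ∀ Λ ∈ A.powerset, ∑ T ∈ Λ.powerset, (-1:ℝ)^(Λ.card - T.card) * f T
      = ∑ T ∈ A.powerset, if T ⊆ Λ then (-1:ℝ)^((Λ \ T).card) * f T else 0 := by
    intro Λ hΛ
    rw [mem_powerset] at hΛ
    rw [← Finset.sum_filter]
    have : A.powerset.filter (· ⊆ Λ) = Λ.powerset := by
      ext T
      simp only [mem_filter, mem_powerset]
      exact ⟨fun h => h.2, fun h => ⟨h.trans hΛ, h⟩⟩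
    rw [this]
    refine Finset.sum_congr rfl fun T hT => ?_
    rw [mem_powerset] at hT
    rw [card_sdiff_of_subset hT]
  rw [Finset.sum_congr rfl step1, Finset.sum_comm]
  have step2 : ∀ T ∈ A.powerset,
      (∑ Λ ∈ A.powerset, if T ⊆ Λ then (-1:ℝ)^((Λ \ T).card) * f T else 0)
      = (if T = A then 1 else 0) * f T := by
    intro T hT
    rw [mem_powerset] at hT
    rw [← Finset.sum_filter]
    rw [Finset.sum_nbij' (i := fun Λ => Λ \ T) (j := fun U => U ∪ T)
      (t := (A \ T).powerset) (g := fun U => (-1:ℝ)^U.card * f T)]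
    · rw [← Finset.sum_mul, sum_pow_neg_one_real]
      congr 1
      by_cases h : T = A
      · simp [h]
      · rw [if_neg h, if_neg]
        rw [sdiff_eq_empty_iff_subset]
        intro h'; exact h (subset_antisymm hT h')
    · intro Λ hΛ
      rw [mem_filter, mem_powerset] at hΛ
      exact mem_powerset.2 (sdiff_subset_sdiff hΛ.1 Subset.rfl)
    · intro U hU
      rw [mem_powerset] at hU
      rw [mem_filter, mem_powerset]
      exact ⟨union_subset (hU.trans sdiff_subset) hT, subset_union_right⟩
    · intro Λ hΛ
      rw [mem_filter] at hΛ
      exact sdiff_union_of_subset hΛ.2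
    · intro U hU
      rw [mem_powerset] at hU
      have : Disjoint U T := Finset.disjoint_left.2 fun a haU haT =>
        (Finset.mem_sdiff.1 (hU haU)).2 haT
      rw [union_sdiff_right, sdiff_eq_self_of_disjoint this]
    · intro Λ hΛ; rfl
  rw [Finset.sum_congr rfl step2]
  rw [Finset.sum_eq_single A]
  · simp
  · intro T hT hne; simp [hne]
  · intro h; exact absurd (mem_powerset_self A) h

lemma mono_update_notMem {n : ℕ} {Λ : Finset (Fin n)} {i : Fin n} (h : i ∉ Λ)
    (x : Fin n → Bool) (b : Bool) : mono Λ (Function.update x i b) = mono Λ x := by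
  unfold mono
  refine Finset.prod_congr rfl fun k hk => ?_
  have hki : k ≠ i := fun hki => h (hki ▸ hk)
  rw [Function.update_of_ne hki]

/-- Summing out one variable of a binary MRF preserves the factorized form. -/
theorem sum_out_variable {n : ℕ} (S : Finset (Finset (Fin n)))
    (β : Finset (Fin n) → ℝ) (i : Fin n) :
    (∀ x : Fin n → Bool,
      ∑ b : Bool, Real.exp (poly S β (Function.update x i b)) =
        Real.exp (poly (S.filter (fun Λ => i ∉ Λ)) β x) *
          ∑ b : Bool,
            Real.exp (poly (S.filter (fun Λ => i ∈ Λ)) β (Function.update x i b))) ∧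
    ∃ βc : Finset (Fin n) → ℝ, (∀ Λ, i ∈ Λ → βc Λ = 0) ∧
      ∀ x : Fin n → Bool,
        ∑ b : Bool,
            Real.exp (poly (S.filter (fun Λ => i ∈ Λ)) β (Function.update x i b)) =
          Real.exp (poly ((Finset.univ : Finset (Finset (Fin n))).filter
            (fun Λ => i ∉ Λ)) βc x) := by
  classical
  constructor
  · intro x
    have key : ∀ b : Bool, poly S β (Function.update x i b) =
        poly (S.filter (fun Λ => i ∉ Λ)) β x +
          poly (S.filter (fun Λ => i ∈ Λ)) β (Function.update x i b) := by
      intro b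
      unfold poly
      rw [← Finset.sum_filter_add_sum_filter_not S (fun Λ => i ∉ Λ)]
      congr 1
      · exact Finset.sum_congr rfl fun Λ hΛ => by
          exact congrArg _ (mono_update_notMem (Finset.mem_filter.1 hΛ).2 x b)
      · apply Finset.sum_congr _ fun _ _ => rfl
        simp [not_not]
    rw [Finset.mul_sum]
    exact Finset.sum_congr rfl fun b _ => by rw [key b, Real.exp_add]
  · set Si := S.filter (fun Λ => i ∈ Λ) with hSi
    set χ : Finset (Fin n) → (Fin n → Bool) := fun T k => decide (k ∈ T) with hχ
    have hgpos : ∀ y : Fin n → Bool,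
        0 < ∑ b : Bool, Real.exp (poly Si β (Function.update y i b)) :=
      fun y => Finset.sum_pos (fun b _ => Real.exp_pos _) Finset.univ_nonempty
    set F : Finset (Fin n) → ℝ := fun T =>
      Real.log (∑ b : Bool, Real.exp (poly Si β (Function.update (χ T) i b))) with hF
    refine ⟨fun Λ => if i ∈ Λ then 0 else
        ∑ T ∈ Λ.powerset, (-1:ℝ)^(Λ.card - T.card) * F T,
      fun Λ h => if_pos h, fun x => ?_⟩
    set A : Finset (Fin n) := (Finset.univ.filter (fun k => x k = true)).erase i with hA
    have hupd : ∀ b : Bool, Function.update (χ A) i b = Function.update x i b := by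
      intro b
      funext k
      by_cases hk : k = i
      · subst hk; simp
      · rw [Function.update_of_ne hk, Function.update_of_ne hk]
        simp [hχ, hA, hk]
    have hpoly : poly (Finset.univ.filter (fun Λ => i ∉ Λ))
        (fun Λ => if i ∈ Λ then 0 else
          ∑ T ∈ Λ.powerset, (-1:ℝ)^(Λ.card - T.card) * F T) x = F A := by
      unfold poly
      rw [← Finset.sum_subset
        (show A.powerset ⊆ Finset.univ.filter (fun Λ => i ∉ Λ) from fun Λ hΛ => by
          rw [Finset.mem_filter]
          exact ⟨Finset.mem_univ _,
            fun hi => Finset.notMem_erase i _ ((Finset.mem_powerset.1 hΛ) hi)⟩)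
        (fun Λ hΛ hΛ' => by
          rw [Finset.mem_filter] at hΛ
          rw [Finset.mem_powerset] at hΛ'
          have : ¬ ∀ k ∈ Λ, x k = true := by
            intro hall
            exact hΛ' fun k hk => Finset.mem_erase.2
              ⟨fun hki => hΛ.2 (hki ▸ hk), Finset.mem_filter.2 ⟨Finset.mem_univ _, hall k hk⟩⟩
          rw [mono_eq_ite, if_neg this, mul_zero])]
      rw [← moebius A F]
      refine Finset.sum_congr rfl fun Λ hΛ => ?_
      rw [Finset.mem_powerset] at hΛ
      have hiΛ : i ∉ Λ := fun hi => Finset.notMem_erase i _ (hΛ hi)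
      have hmono : mono Λ x = 1 := by
        rw [mono_eq_ite, if_pos]
        intro k hk
        exact (Finset.mem_filter.1 (Finset.mem_of_mem_erase (hΛ hk))).2
      simp only []
      rw [if_neg hiΛ, hmono, mul_one]
    rw [hpoly, hF]
    rw [Real.exp_log (hgpos (χ A))]
    exact Finset.sum_congr rfl fun b _ => by rw [hupd b]
end
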